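/- Let F = Inv ∘ (0,1,γ) on GF(2^n) with n ≥ 4, γ ∉ {0,1}, c ∉ {0,1}. Let a ≠ 0 and b ∈ GF(2^n). The equation F(x+a) + c·F(x) = b has exactly two solutions in GF(2^n) \ P_a (where P_a = {0,1,γ,a,a+1,a+γ}) if and only if all of the following hold: b ≠ 0, ab + c + 1 ≠ 0, Tr(abc/(ab+c+1)²) = 0, (b+c)a + b + c + 1 ≠ 0, (b+1)a + b + c + 1 ≠ 0, (bγ+c)a + γ(bγ+c+1) ≠ 0, and (bγ+1)a + γ(bγ+c+1) ≠ 0. -/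

import Mathlib

open scoped Classical

/-- The 3-cycle `(0, 1, γ)` : sends `0 ↦ 1`, `1 ↦ γ`, `γ ↦ 0`, fixes all other points. -/
noncomputable def cyc (n : ℕ) (γ : GaloisField 2 n) :
    GaloisField 2 n → GaloisField 2 n :=
  fun x => if x = 0 then 1 else if x = 1 then γ else if x = γ then 0 else x

section AS
variable {K : Type*} [Field K] [Finite K] [CharP K 2] [Algebra (ZMod 2) K]

lemma tr_sq (x : K) : Algebra.trace (ZMod 2) K (x ^ 2) = Algebra.trace (ZMod 2) K x := by
  have h2 : ExpChar K 2 := ExpChar.prime Nat.prime_two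
  let e : K ≃ₐ[ZMod 2] K :=
    AlgEquiv.ofRingEquiv (f := frobeniusEquiv K 2)
      (fun r => by
        show (algebraMap (ZMod 2) K r) ^ 2 = algebraMap (ZMod 2) K r
        rw [← map_pow]
        congr 1
        have : r ^ 2 = r := by revert r; decide
        rw [this])
  have he : e x = x ^ 2 := rfl
  rw [← he, Algebra.trace_eq_of_algEquiv e x]

lemma artin_schreier (d : K) :
    Algebra.trace (ZMod 2) K d = 0 ↔ ∃ y : K, y ^ 2 + y = d := by
  have htwo : (2 : K) = 0 := CharTwo.two_eq_zero
  let φ : K →+ K :=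
    { toFun := fun x => x ^ 2 + x
      map_zero' := by simp
      map_add' := fun x y => by
        have := CharTwo.add_sq x y
        linear_combination this }
  let T : K →+ ZMod 2 := (Algebra.trace (ZMod 2) K).toAddMonoidHom
  have hT : ∀ x : K, T x = Algebra.trace (ZMod 2) K x := fun _ => rfl
  have hφ : ∀ x : K, φ x = x ^ 2 + x := fun _ => rfl
  have hsub : (φ.range : Set K) ⊆ (T.ker : Set K) := by
    rintro _ ⟨y, rfl⟩
    show φ y ∈ T.ker
    rw [AddMonoidHom.mem_ker, hφ]
    show T _ = 0
    rw [hT, map_add, tr_sq]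
    exact CharTwo.add_self_eq_zero _
  -- surjectivity of T
  have hexists : ∃ z : K, Algebra.trace (ZMod 2) K z ≠ 0 := by
    by_contra h
    push_neg at h
    have hsep : Algebra.IsSeparable (ZMod 2) K := IsGalois.to_isSeparable
    have hnd := traceForm_nondegenerate (ZMod 2) K
    refine one_ne_zero (hnd.1 1 fun y => ?_)
    rw [Algebra.traceForm_apply, one_mul]
    exact h y
  have hTsurj : Function.Surjective T := by
    obtain ⟨z, hz⟩ := hexists
    intro w
    rcases (by decide : ∀ u : ZMod 2, u = 0 ∨ u = 1) w with rfl | rfl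
    · exact ⟨0, map_zero T⟩
    · refine ⟨z, ?_⟩
      rw [hT]
      rcases (by decide : ∀ u : ZMod 2, u = 0 ∨ u = 1) (Algebra.trace (ZMod 2) K z)
        with h | h
      · exact absurd h hz
      · exact h
  -- kernel of φ is {0, 1}
  have hker : (φ.ker : Set K) = {0, 1} := by
    ext x
    simp only [SetLike.mem_coe, AddMonoidHom.mem_ker, hφ, Set.mem_insert_iff,
      Set.mem_singleton_iff]
    constructor
    · intro h
      have hx : x * (x + 1) = 0 := by linear_combination h
      rcases mul_eq_zero.mp hx with h1 | h1
      · exact Or.inl h1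
      · exact Or.inr (by linear_combination h1 - htwo)
    · rintro (rfl | rfl)
      · simp
      · linear_combination htwo
  -- cardinalities
  have hcardker : Nat.card φ.ker = 2 := by
    have : Nat.card φ.ker = (φ.ker : Set K).ncard := by
      rw [← Nat.card_coe_set_eq, SetLike.coe_sort_coe]
    rw [this, hker, Set.ncard_pair (zero_ne_one)]
  have hcardT : Nat.card T.range = 2 := by
    rw [AddMonoidHom.range_eq_top.mpr hTsurj]
    rw [AddSubgroup.card_top, Nat.card_zmod]
  have h1 : Nat.card K = Nat.card (K ⧸ φ.ker) * Nat.card φ.ker :=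
    AddSubgroup.card_eq_card_quotient_mul_card_addSubgroup φ.ker
  have h2 : Nat.card (K ⧸ φ.ker) = Nat.card φ.range :=
    Nat.card_congr (QuotientAddGroup.quotientKerEquivRange φ).toEquiv
  have h3 : Nat.card K = Nat.card (K ⧸ T.ker) * Nat.card T.ker :=
    AddSubgroup.card_eq_card_quotient_mul_card_addSubgroup T.ker
  have h4 : Nat.card (K ⧸ T.ker) = Nat.card T.range :=
    Nat.card_congr (QuotientAddGroup.quotientKerEquivRange T).toEquiv
  have hr : (T.ker : Set K).ncard ≤ (φ.range : Set K).ncard := by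
    rw [← Nat.card_coe_set_eq, SetLike.coe_sort_coe,
      ← Nat.card_coe_set_eq, SetLike.coe_sort_coe]
    rw [h2, hcardker] at h1
    rw [h4, hcardT] at h3
    omega
  have heq : (φ.range : Set K) = (T.ker : Set K) :=
    Set.eq_of_subset_of_ncard_le hsub hr (Set.toFinite _)
  constructor
  · intro hd
    have : d ∈ (T.ker : Set K) := by
      rw [SetLike.mem_coe, AddMonoidHom.mem_ker, hT]
      exact hd
    rw [← heq] at this
    obtain ⟨y, hy⟩ := this
    exact ⟨y, hy⟩
  · rintro ⟨y, rfl⟩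
    rw [map_add, tr_sq]
    exact CharTwo.add_self_eq_zero _
end AS

theorem stmt_13 (n : ℕ) (hn : 4 ≤ n) (γ c : GaloisField 2 n)
    (hγ0 : γ ≠ 0) (hγ1 : γ ≠ 1) (hc0 : c ≠ 0) (hc1 : c ≠ 1)
    (a b : GaloisField 2 n) (ha : a ≠ 0)
    (F : GaloisField 2 n → GaloisField 2 n) (hF : F = fun x => (cyc n γ x)⁻¹) :
    Nat.card {x : GaloisField 2 n //
        x ∉ ({0, 1, γ, a, a + 1, a + γ} : Set (GaloisField 2 n)) ∧
        F (x + a) + c * F x = b} = 2 ↔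
      (b ≠ 0 ∧ a * b + c + 1 ≠ 0 ∧
        Algebra.trace (ZMod 2) (GaloisField 2 n)
          (a * b * c / (a * b + c + 1) ^ 2) = 0 ∧
        (b + c) * a + b + c + 1 ≠ 0 ∧
        (b + 1) * a + b + c + 1 ≠ 0 ∧
        (b * γ + c) * a + γ * (b * γ + c + 1) ≠ 0 ∧
        (b * γ + 1) * a + γ * (b * γ + c + 1) ≠ 0) := by
  subst hF
  beta_reduce
  have htwo : (2 : GaloisField 2 n) = 0 := CharTwo.two_eq_zero
  set P : Set (GaloisField 2 n) := {0, 1, γ, a, a + 1, a + γ} with hP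
  set Q : GaloisField 2 n → GaloisField 2 n := fun x => b * x ^ 2 + (a * b + c + 1) * x + a * c with hQdef
  have hQ : ∀ x, Q x = b * x ^ 2 + (a * b + c + 1) * x + a * c := fun _ => rfl
  -- Step 1: equivalence of the equation with the quadratic, off P
  have key : ∀ x : GaloisField 2 n,
      (x ∉ P ∧ (cyc n γ (x + a))⁻¹ + c * (cyc n γ x)⁻¹ = b) ↔ (x ∉ P ∧ Q x = 0) := by
    intro x
    refine and_congr_right fun hx => ?_
    rw [hP] at hx
    simp only [Set.mem_insert_iff, Set.mem_singleton_iff, not_or] at hx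
    obtain ⟨h0, h1, hγx, haa, ha1, haγ⟩ := hx
    have hxa0 : x + a ≠ 0 := fun h => haa (by linear_combination h - a * htwo)
    have hxa1 : x + a ≠ 1 := fun h => ha1 (by linear_combination h - a * htwo)
    have hxaγ : x + a ≠ γ := fun h => haγ (by linear_combination h - a * htwo)
    have hc1 : cyc n γ x = x := by rw [cyc, if_neg h0, if_neg h1, if_neg hγx]
    have hc2 : cyc n γ (x + a) = x + a := by rw [cyc, if_neg hxa0, if_neg hxa1, if_neg hxaγ]
    rw [hc1, hc2]
    have hxx : x * (x + a) ≠ 0 := mul_ne_zero h0 hxa0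
    have e1 : (x + a)⁻¹ * (x * (x + a)) = x := by
      rw [mul_comm x (x + a), inv_mul_cancel_left₀ hxa0]
    have e2 : c * x⁻¹ * (x * (x + a)) = c * (x + a) := by
      rw [mul_assoc c, inv_mul_cancel_left₀ h0]
    rw [hQ]
    constructor
    · intro h
      have h' : ((x + a)⁻¹ + c * x⁻¹) * (x * (x + a)) = b * (x * (x + a)) := by rw [h]
      rw [add_mul, e1, e2] at h'
      linear_combination -h' + (x + c * x + a * c) * htwo
    · intro h
      have goal' : x + c * (x + a) = b * (x * (x + a)) := by
        linear_combination -h + (x + c * x + a * c) * htwo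
      apply mul_right_cancel₀ hxx
      rw [add_mul, e1, e2]
      exact goal'
  -- Step 2 : Nat.card to ncard
  set S : Set (GaloisField 2 n) := {x | x ∉ P ∧ Q x = 0} with hS
  have hcard : Nat.card {x : GaloisField 2 n // x ∉ P ∧ (cyc n γ (x + a))⁻¹ + c * (cyc n γ x)⁻¹ = b}
      = S.ncard := by
    rw [← Nat.card_coe_set_eq]
    exact Nat.card_congr (Equiv.subtypeEquivRight key)
  rw [hcard]
  -- helper: subsets of singletons have ncard ≠ 2
  have hsmall1 : ∀ t : GaloisField 2 n, S ⊆ {t} → S.ncard ≠ 2 := by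
    intro t hsub h2
    have hle := Set.ncard_le_ncard hsub (Set.finite_singleton t)
    rw [Set.ncard_singleton, h2] at hle
    omega
  by_cases hb : b = 0
  · refine iff_of_false ?_ (fun h => h.1 hb)
    have hc1' : c + 1 ≠ 0 := fun h => hc1 (by linear_combination h - htwo)
    refine hsmall1 (a * c / (c + 1)) ?_
    rintro x ⟨-, hQx⟩
    rw [hQ] at hQx
    simp only [Set.mem_singleton_iff]
    rw [eq_div_iff hc1']
    linear_combination hQx - (x ^ 2 + a * x) * hb - a * c * htwo
  by_cases hB : a * b + c + 1 = 0
  · refine iff_of_false ?_ (fun h => h.2.1 hB)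
    rcases Set.eq_empty_or_nonempty S with hSe | ⟨x₀, hx₀⟩
    · rw [hSe]; simp
    · refine hsmall1 x₀ ?_
      rintro x ⟨-, hQx⟩
      obtain ⟨-, hQx₀⟩ := hx₀
      simp only [Set.mem_singleton_iff]
      rw [hQ] at hQx hQx₀
      have hb2 : b * (x - x₀) ^ 2 = 0 := by
        linear_combination hQx - hQx₀ + (x₀ - x) * hB + (b * x₀ ^ 2 - b * x * x₀) * htwo
      have hsq : (x - x₀) ^ 2 = 0 := (mul_eq_zero.mp hb2).resolve_left hb
      have := pow_eq_zero_iff (n := 2) (by norm_num) |>.mp hsq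
      exact sub_eq_zero.mp this
  have hB2 : (a * b + c + 1) ^ 2 ≠ 0 := pow_ne_zero _ hB
  by_cases htr : Algebra.trace (ZMod 2) (GaloisField 2 n)
      (a * b * c / (a * b + c + 1) ^ 2) = 0
  case neg =>
    refine iff_of_false ?_ (fun h => htr h.2.2.1)
    have hSe : S = ∅ := by
      rw [Set.eq_empty_iff_forall_notMem]
      rintro x ⟨-, hQx⟩
      apply htr
      rw [artin_schreier]
      refine ⟨b * x / (a * b + c + 1), ?_⟩
      rw [hQ] at hQx
      rw [eq_div_iff hB2]
      have h1 : (b * x / (a * b + c + 1)) ^ 2 * (a * b + c + 1) ^ 2 = (b * x) ^ 2 := by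
        rw [div_pow, div_mul_cancel₀ _ hB2]
      have h2 : (b * x / (a * b + c + 1)) * (a * b + c + 1) ^ 2 = b * x * (a * b + c + 1) := by
        rw [sq, ← mul_assoc, div_mul_cancel₀ _ hB]
      rw [add_mul, h1, h2]
      linear_combination (-b) * hQx + (b ^ 2 * x ^ 2 + b * (a * b + c + 1) * x) * htwo
    rw [hSe]; simp
  case pos =>
    obtain ⟨y, hy⟩ := (artin_schreier _).mp htr
    have hy' : (a * b + c + 1) ^ 2 * (y ^ 2 + y) = a * b * c := by
      rw [hy]; field_simp
    obtain ⟨r, hr⟩ : ∃ r : GaloisField 2 n, r = (a * b + c + 1) * y / b := ⟨_, rfl⟩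
    obtain ⟨s, hs⟩ : ∃ s : GaloisField 2 n, s = r + (a * b + c + 1) / b := ⟨_, rfl⟩
    have hbr : b * r = (a * b + c + 1) * y := by
      rw [hr]; field_simp
    have hbs2 : b * s = b * r + (a * b + c + 1) := by
      rw [hs, mul_add, mul_div_cancel₀ _ hb]
    have hrs : r ≠ s := by
      intro h
      have h0 : (a * b + c + 1) / b = 0 := by linear_combination -h - hs
      rcases div_eq_zero_iff.mp h0 with h' | h'
      · exact hB h'
      · exact hb h'
    have hQrX : b * r ^ 2 + (a * b + c + 1) * r + a * c = 0 := by
      have h : b * (b * r ^ 2 + (a * b + c + 1) * r + a * c) = 0 := by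
        linear_combination (b * r + (a * b + c + 1) * y + (a * b + c + 1)) * hbr + hy'
          + a * b * c * htwo
      exact (mul_eq_zero.mp h).resolve_left hb
    have hQr : Q r = 0 := by rw [hQ]; exact hQrX
    have hQsX : b * s ^ 2 + (a * b + c + 1) * s + a * c = 0 := by
      have h : b * (b * s ^ 2 + (a * b + c + 1) * s + a * c) = 0 := by
        linear_combination (b * s + b * r + 2 * (a * b + c + 1)) * hbs2 + b * hQrX
          + ((a * b + c + 1) * b * r + (a * b + c + 1) ^ 2) * htwo
      exact (mul_eq_zero.mp h).resolve_left hb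
    have hQs : Q s = 0 := by rw [hQ]; exact hQsX
    have hroots : ∀ x : GaloisField 2 n, Q x = 0 ↔ x = r ∨ x = s := by
      intro x
      constructor
      · intro hx
        have hfac : (x - r) * (b * (x - s)) = 0 := by
          rw [hQ] at hx
          linear_combination hx + hQrX - (x - r) * hbs2
            - ((a * b + c + 1) * x + a * c + b * r * x) * htwo
        rcases mul_eq_zero.mp hfac with h' | h'
        · exact Or.inl (sub_eq_zero.mp h')
        · rcases mul_eq_zero.mp h' with h'' | h''
          · exact absurd h'' hb
          · exact Or.inr (sub_eq_zero.mp h'')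
      · rintro (rfl | rfl)
        exacts [hQr, hQs]
    have hQ0 : Q 0 ≠ 0 := by
      have h : Q 0 = a * c := by rw [hQ]; ring
      rw [h]; exact mul_ne_zero ha hc0
    have hQa : Q a ≠ 0 := by
      have h : Q a = a := by rw [hQ]; linear_combination (a ^ 2 * b + a * c) * htwo
      rw [h]; exact ha
    have e1 : Q 1 = (b + c) * a + b + c + 1 := by rw [hQ]; ring
    have e2 : Q (a + 1) = (b + 1) * a + b + c + 1 := by
      rw [hQ]; linear_combination (a ^ 2 * b + a * b + a * c) * htwo
    have e3 : Q γ = (b * γ + c) * a + γ * (b * γ + c + 1) := by rw [hQ]; ring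
    have e4 : Q (a + γ) = (b * γ + 1) * a + γ * (b * γ + c + 1) := by
      rw [hQ]; linear_combination (a ^ 2 * b + a * b * γ + a * c) * htwo
    have hsmallP : ∀ p : GaloisField 2 n, p ∈ P → Q p = 0 → S.ncard ≠ 2 := by
      intro p hp hQp
      rcases (hroots p).mp hQp with hpr | hps
      · subst hpr
        refine hsmall1 s ?_
        rintro x ⟨hxP, hQx⟩
        rcases (hroots x).mp hQx with rfl | rfl
        · exact absurd hp hxP
        · exact Set.mem_singleton _
      · subst hps
        refine hsmall1 r ?_
        rintro x ⟨hxP, hQx⟩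
        rcases (hroots x).mp hQx with rfl | rfl
        · exact Set.mem_singleton _
        · exact absurd hp hxP
    by_cases hC1 : (b + c) * a + b + c + 1 = 0
    · exact iff_of_false (hsmallP 1 (by rw [hP]; simp) (by rw [e1]; exact hC1))
        (fun h => h.2.2.2.1 hC1)
    by_cases hC2 : (b + 1) * a + b + c + 1 = 0
    · exact iff_of_false (hsmallP (a + 1) (by rw [hP]; simp) (by rw [e2]; exact hC2))
        (fun h => h.2.2.2.2.1 hC2)
    by_cases hC3 : (b * γ + c) * a + γ * (b * γ + c + 1) = 0
    · exact iff_of_false (hsmallP γ (by rw [hP]; simp) (by rw [e3]; exact hC3))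
        (fun h => h.2.2.2.2.2.1 hC3)
    by_cases hC4 : (b * γ + 1) * a + γ * (b * γ + c + 1) = 0
    · exact iff_of_false (hsmallP (a + γ) (by rw [hP]; simp) (by rw [e4]; exact hC4))
        (fun h => h.2.2.2.2.2.2 hC4)
    refine iff_of_true ?_ ⟨hb, hB, htr, hC1, hC2, hC3, hC4⟩
    have hSrs : S = {r, s} := by
      ext x
      simp only [hS, Set.mem_setOf_eq, Set.mem_insert_iff, Set.mem_singleton_iff]
      constructor
      · rintro ⟨-, hQx⟩
        exact (hroots x).mp hQx
      · intro hx
        have hQx : Q x = 0 := (hroots x).mpr hx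
        refine ⟨?_, hQx⟩
        intro hxP
        rw [hP] at hxP
        simp only [Set.mem_insert_iff, Set.mem_singleton_iff] at hxP
        rcases hxP with rfl | rfl | rfl | rfl | rfl | rfl
        · exact hQ0 hQx
        · exact hC1 (by rw [← e1]; exact hQx)
        · exact hC3 (by rw [← e3]; exact hQx)
        · exact hQa hQx
        · exact hC2 (by rw [← e2]; exact hQx)
        · exact hC4 (by rw [← e4]; exact hQx)
    rw [hSrs]
    exact Set.ncard_pair hrs
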